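/- arXiv:2301.04192 — 4 statements merged into one kernel-verified Lean document; each statement's English description precedes it below -/
import Mathlib

section
/- With R = ℂ[z, z⁻¹, u₁, u₂], A = ℂ[z, u₁, u₂] and B₃ the ℂ-subalgebra of R generated by z⁻¹, z³u₁ and z⁻¹u₂, the quotient ℂ-vector space R/(A + B₃) is infinite dimensional; indeed the images of the monomials z^l u₁^i u₂^s with l ≤ −1 and s > 3i − l are ℂ-linearly independent in R/(A + B₃). -/
open MvPolynomial

/-- `R = ℂ[z, z⁻¹, u₁, u₂]`: polynomials in `u₁ = X 0`, `u₂ = X 1` over the ring of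
Laurent polynomials in `z`. -/
noncomputable abbrev LaurentThreefoldRing : Type :=
  MvPolynomial (Fin 2) (LaurentPolynomial ℂ)

/-- The monomial `zˡ` in `R`. -/
noncomputable def zpow (l : ℤ) : LaurentThreefoldRing :=
  MvPolynomial.C (LaurentPolynomial.T l)

/-- `A = ℂ[z, u₁, u₂]`, the ring of functions on the chart `U`. -/
noncomputable def chartA : Subalgebra ℂ LaurentThreefoldRing :=
  Algebra.adjoin ℂ {zpow 1, X 0, X 1}

/-- `B_k`, the ℂ-subalgebra of `R` generated by `z⁻¹`, `zᵏu₁` and `z^{2−k}u₂`,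
the ring of functions on the chart `V` of `W_k`. -/
noncomputable def chartB (k : ℤ) : Subalgebra ℂ LaurentThreefoldRing :=
  Algebra.adjoin ℂ {zpow (-1), zpow k * X 0, zpow (2 - k) * X 1}


/-- The ℂ-subspace `A + B₃` of `R`. -/
noncomputable def sumAB3 : Submodule ℂ LaurentThreefoldRing :=
  chartA.toSubmodule ⊔ (chartB 3).toSubmodule

/-! ### Auxiliary machinery -/

/-- The coefficient functional extracting the coefficient of `zˡ · (monomial m)`. -/
noncomputable def cf (l : ℤ) (m : Fin 2 →₀ ℕ) : LaurentThreefoldRing →ₗ[ℂ] ℂ where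
  toFun p := (MvPolynomial.coeff m p).coeff l
  map_add' p q := by
    show (MvPolynomial.coeff m (p + q)).coeff l = _
    rw [MvPolynomial.coeff_add]; rfl
  map_smul' c p := by
    show (MvPolynomial.coeff m (c • p)).coeff l = _
    rw [MvPolynomial.coeff_smul]
    rfl

noncomputable def mexp (i s : ℕ) : Fin 2 →₀ ℕ :=
  Finsupp.single 0 i + Finsupp.single 1 s

lemma zpowAddT (a b : ℤ) : zpow (a + b) = zpow a * zpow b := by
  rw [zpow, zpow, zpow, LaurentPolynomial.T_add, map_mul]

lemma zpow_zero' : zpow 0 = 1 := by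
  rw [zpow, LaurentPolynomial.T_zero, map_one]

lemma mon_mul_mon (a a' : ℤ) (b b' c c' : ℕ) :
    (zpow a * X 0 ^ b * X 1 ^ c) * (zpow a' * X 0 ^ b' * X 1 ^ c') =
      zpow (a + a') * X 0 ^ (b + b') * X 1 ^ (c + c') := by
  rw [zpowAddT]; ring

lemma zpow_mul_pow (a : ℤ) (i s : ℕ) :
    zpow a * X 0 ^ i * X 1 ^ s = monomial (mexp i s) (LaurentPolynomial.T a) := by
  rw [zpow, C_apply, X_pow_eq_monomial, X_pow_eq_monomial, monomial_mul, monomial_mul,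
    mexp]
  simp

lemma cf_monomial (l : ℤ) (m m' : Fin 2 →₀ ℕ) (r : LaurentPolynomial ℂ) :
    cf l m (monomial m' r) = if m' = m then r.coeff l else 0 := by
  show (MvPolynomial.coeff m (monomial m' r)).coeff l = _
  rw [MvPolynomial.coeff_monomial]
  split <;> rfl

lemma mexp_inj {b c i s : ℕ} (h : mexp b c = mexp i s) : b = i ∧ c = s := by
  have h0 := DFunLike.congr_fun h 0
  have h1 := DFunLike.congr_fun h 1
  simp [mexp, Finsupp.add_apply, Finsupp.single_apply] at h0 h1
  exact ⟨h0, h1⟩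

lemma cf_mon (l a : ℤ) (i s b c : ℕ) :
    cf l (mexp i s) (zpow a * X 0 ^ b * X 1 ^ c) =
      if a = l ∧ b = i ∧ c = s then 1 else 0 := by
  rw [zpow_mul_pow, cf_monomial]
  have hT : (LaurentPolynomial.T a : LaurentPolynomial ℂ).coeff l = if a = l then 1 else 0 := by
    exact LaurentPolynomial.T_apply l a
  by_cases h : mexp b c = mexp i s
  · obtain ⟨hb, hc⟩ := mexp_inj h
    rw [if_pos h, hT]
    subst hb; subst hc
    by_cases ha : a = l <;> simp [ha]
  · rw [if_neg h, if_neg]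
    rintro ⟨-, hb, hc⟩
    exact h (by rw [hb, hc])

lemma cf_vanish_span {l : ℤ} {i s : ℕ} {x : LaurentThreefoldRing}
    {S : Set LaurentThreefoldRing}
    (hgen : ∀ g ∈ Submonoid.closure S, cf l (mexp i s) g = 0)
    (hx : x ∈ Submodule.span ℂ (Submonoid.closure S : Set LaurentThreefoldRing)) :
    cf l (mexp i s) x = 0 := by
  induction hx using Submodule.span_induction with
  | mem g hg => exact hgen g hg
  | zero => exact map_zero _
  | add x y hx hy ihx ihy => rw [map_add, ihx, ihy, add_zero]
  | smul a x hx ih => rw [map_smul, ih, smul_zero]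

lemma cf_vanish {l : ℤ} {i s : ℕ} (hl : l ≤ -1) (hs : 3 * (i : ℤ) - l < (s : ℤ))
    {x : LaurentThreefoldRing} (hx : x ∈ sumAB3) : cf l (mexp i s) x = 0 := by
  rw [sumAB3, Submodule.mem_sup] at hx
  obtain ⟨y, hy, z, hz, rfl⟩ := hx
  rw [map_add]
  have hA : cf l (mexp i s) y = 0 := by
    rw [Subalgebra.mem_toSubmodule, chartA, ← Subalgebra.mem_toSubmodule,
      Algebra.adjoin_eq_span] at hy
    refine cf_vanish_span (fun g hg => ?_) hy
    have hstruct : ∃ (a b c : ℕ), g = zpow a * X 0 ^ b * X 1 ^ c := by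
      induction hg using Submonoid.closure_induction with
      | mem g hg =>
        rcases hg with hg | hg | hg
        · exact ⟨1, 0, 0, by rw [hg]; push_cast; ring⟩
        · exact ⟨0, 1, 0, by rw [hg, Int.natCast_zero, zpow_zero']; ring⟩
        · exact ⟨0, 0, 1, by rw [hg, Int.natCast_zero, zpow_zero']; ring⟩
      | one => exact ⟨0, 0, 0, by rw [Int.natCast_zero, zpow_zero']; ring⟩
      | mul x y hx hy ihx ihy =>
        obtain ⟨a, b, c, rfl⟩ := ihx
        obtain ⟨a', b', c', rfl⟩ := ihy
        exact ⟨a + a', b + b', c + c', by rw [mon_mul_mon]; push_cast; ring_nf⟩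
    obtain ⟨a, b, c, rfl⟩ := hstruct
    rw [cf_mon, if_neg]
    rintro ⟨ha, -, -⟩
    omega
  have hB : cf l (mexp i s) z = 0 := by
    rw [Subalgebra.mem_toSubmodule, chartB, ← Subalgebra.mem_toSubmodule,
      Algebra.adjoin_eq_span] at hz
    refine cf_vanish_span (fun g hg => ?_) hz
    have hstruct : ∃ (a : ℤ) (b c : ℕ), a ≤ 3 * (b : ℤ) - c ∧
        g = zpow a * X 0 ^ b * X 1 ^ c := by
      induction hg using Submonoid.closure_induction with
      | mem g hg =>
        rcases hg with hg | hg | hg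
        · exact ⟨-1, 0, 0, by norm_num, by rw [hg]; ring⟩
        · exact ⟨3, 1, 0, by norm_num, by rw [hg]; ring⟩
        · exact ⟨2 - 3, 0, 1, by norm_num, by rw [hg]; ring⟩
      | one => exact ⟨0, 0, 0, by norm_num, by rw [zpow_zero']; ring⟩
      | mul x y hx hy ihx ihy =>
        obtain ⟨a, b, c, hle, rfl⟩ := ihx
        obtain ⟨a', b', c', hle', rfl⟩ := ihy
        refine ⟨a + a', b + b', c + c', by push_cast; omega, by rw [mon_mul_mon]⟩
    obtain ⟨a, b, c, hle, rfl⟩ := hstruct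
    rw [cf_mon, if_neg]
    rintro ⟨ha, hb, hc⟩
    subst ha; subst hb; subst hc
    omega
  rw [hA, hB, add_zero]


/-- The quotient `R/(A + B₃)` is an infinite-dimensional ℂ-vector space; indeed the images of
the monomials `zˡ u₁ⁱ u₂ˢ` with `l ≤ −1` and `s > 3 i − l` are ℂ-linearly independent
in `R/(A + B₃)`. -/
theorem quotient_by_chartA_add_chartB_three_infiniteDimensional :
    ¬ FiniteDimensional ℂ (LaurentThreefoldRing ⧸ sumAB3) ∧
      LinearIndependent ℂ
        (fun t : {t : ℤ × ℕ × ℕ // t.1 ≤ -1 ∧ 3 * (t.2.1 : ℤ) - t.1 < (t.2.2 : ℤ)} =>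
          Submodule.mkQ sumAB3 (zpow t.1.1 * X 0 ^ t.1.2.1 * X 1 ^ t.1.2.2)) := by
  set ι := {t : ℤ × ℕ × ℕ // t.1 ≤ -1 ∧ 3 * (t.2.1 : ℤ) - t.1 < (t.2.2 : ℤ)} with hι
  have hli : LinearIndependent ℂ
      (fun t : ι => Submodule.mkQ sumAB3 (zpow t.1.1 * X 0 ^ t.1.2.1 * X 1 ^ t.1.2.2)) := by
    rw [linearIndependent_iff]
    intro g hg
    have hmem : (g.sum fun t a =>
        a • (zpow t.1.1 * X 0 ^ t.1.2.1 * X 1 ^ t.1.2.2)) ∈ sumAB3 := by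
      rw [← Submodule.Quotient.mk_eq_zero]
      have : Finsupp.linearCombination ℂ
          (fun t : ι => Submodule.mkQ sumAB3 (zpow t.1.1 * X 0 ^ t.1.2.1 * X 1 ^ t.1.2.2)) g
          = Submodule.mkQ sumAB3
            (g.sum fun t a => a • (zpow t.1.1 * X 0 ^ t.1.2.1 * X 1 ^ t.1.2.2)) := by
        rw [Finsupp.linearCombination_apply, map_finsuppSum]
        simp [map_smul]
      rw [this] at hg
      exact hg
    ext t
    obtain ⟨⟨l, i, s⟩, hl, hs⟩ := t
    have := cf_vanish hl hs hmem
    rw [map_finsuppSum] at this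
    rw [Finsupp.zero_apply]
    calc g ⟨(l, i, s), hl, hs⟩
        = g.sum fun t' a => a * (if t'.1.1 = l ∧ t'.1.2.1 = i ∧ t'.1.2.2 = s then 1 else 0) := by
          rw [Finsupp.sum]
          rw [Finset.sum_eq_single ⟨(l, i, s), hl, hs⟩]
          · simp
          · intro t' _ hne
            rw [if_neg, mul_zero]
            rintro ⟨h1, h2, h3⟩
            exact hne (Subtype.ext (by simp [Prod.ext_iff, h1, h2, h3]))
          · intro h
            simp [Finsupp.notMem_support_iff.mp h]
      _ = g.sum fun t' a => cf l (mexp i s) (a • (zpow t'.1.1 * X 0 ^ t'.1.2.1 * X 1 ^ t'.1.2.2)) := by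
          refine Finsupp.sum_congr fun t' _ => ?_
          rw [map_smul, cf_mon, smul_eq_mul]
      _ = 0 := this
  refine ⟨fun hfd => ?_, hli⟩
  have : Infinite ι := by
    refine Infinite.of_injective (fun n : ℕ => (⟨(-1, 0, n + 2), by norm_num, by push_cast; omega⟩ : ι)) ?_
    intro m n h
    have := congrArg (fun t : ι => t.1.2.2) h
    simpa using this
  have := hli.finite
  exact absurd this (by rw [not_finite_iff_infinite]; exact ‹Infinite ι›)
end

section
/- Let j ≥ 2. For every integer r with 1 ≤ r ≤ 2j−2 there exist a, b ∈ ℂ^{2j−2} with (a,b) ≠ (0,0) such that the (4j−4) × (2j−2) stacked triangular Hankel matrix M(a,b) has rank exactly r. Consequently every cokernel dimension (stalk rank of the quantum moduli space) between 2j−2 and 4j−5 occurs. -/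
open scoped ComplexOrder

/-- The `n × n` triangular Hankel matrix of the vector `a = (a₀, …, a_{n−1})`:
its `(i, m)` entry is `a_{i+m}` when `i + m ≤ n − 1`, and `0` otherwise. -/
def triHankel {n : ℕ} (a : Fin n → ℂ) : Matrix (Fin n) (Fin n) ℂ :=
  fun i m => if h : (i : ℕ) + (m : ℕ) < n then a ⟨(i : ℕ) + (m : ℕ), h⟩ else 0

/-- For `a, b ∈ ℂⁿ`, the `2n × n` matrix obtained by stacking the triangular Hankel
matrices `H(a)` and `H(b)`. -/
def stackedTriHankel {n : ℕ} (a b : Fin n → ℂ) : Matrix (Fin n ⊕ Fin n) (Fin n) ℂ :=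
  Matrix.fromRows (triHankel a) (triHankel b)

lemma triHankel_zero {n : ℕ} : triHankel (0 : Fin n → ℂ) = 0 := by
  ext i m
  simp only [triHankel, Pi.zero_apply, Matrix.zero_apply]
  split <;> rfl

lemma triHankel_indicator {n k : ℕ} (hk : k < n) (i m : Fin n) :
    triHankel (fun p : Fin n => if (p : ℕ) = k then (1 : ℂ) else 0) i m
      = if (i : ℕ) + (m : ℕ) = k then 1 else 0 := by
  simp only [triHankel]
  split
  · rfl
  · rename_i h
    rw [if_neg]
    omega

/-- For `j ≥ 2` and every integer `r` with `1 ≤ r ≤ 2j−2`, there exist `a, b ∈ ℂ^{2j−2}` with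
`(a,b) ≠ (0,0)` such that the `(4j−4) × (2j−2)` stacked triangular Hankel matrix `M(a,b)` has
rank exactly `r`; consequently every cokernel dimension between `2j−2` and `4j−5` occurs. -/
theorem stackedTriHankel_rank_surjective (j : ℕ) (hj : 2 ≤ j) (r : ℕ) (hr1 : 1 ≤ r)
    (hr2 : r ≤ 2 * j - 2) :
    ∃ a b : Fin (2 * j - 2) → ℂ, (a, b) ≠ (0, 0) ∧ (stackedTriHankel a b).rank = r := by
  set n := 2 * j - 2 with hn
  have hnpos : 0 < n := by omega
  set k := r - 1 with hkdef
  have hk : k < n := by omega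
  set a : Fin n → ℂ := fun p => if (p : ℕ) = k then (1 : ℂ) else 0 with ha
  refine ⟨a, 0, ?_, ?_⟩
  · intro h
    have h1 : a = 0 := congrArg Prod.fst h
    have h2 : a ⟨k, hk⟩ = 0 := by rw [h1]; rfl
    simp [ha] at h2
  · set H := triHankel a with hH
    set d : Fin n → ℂ := fun m => if (m : ℕ) ≤ k then (1 : ℂ) else 0 with hd
    have hHent : ∀ i m : Fin n, H i m = if (i : ℕ) + (m : ℕ) = k then 1 else 0 :=
      fun i m => triHankel_indicator hk i m
    -- H * H = diagonal d
    have hHH : H * H = Matrix.diagonal d := by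
      ext i m
      rw [Matrix.mul_apply]
      simp only [hHent]
      by_cases hik : (i : ℕ) ≤ k
      · set l0 : Fin n := ⟨k - (i : ℕ), by omega⟩ with hl0
        have hl0v : (l0 : ℕ) = k - (i : ℕ) := rfl
        have key : ∀ l : Fin n,
            ((if (i : ℕ) + (l : ℕ) = k then (1 : ℂ) else 0) *
              (if (l : ℕ) + (m : ℕ) = k then 1 else 0))
            = if l = l0 then (if (l0 : ℕ) + (m : ℕ) = k then (1 : ℂ) else 0) else 0 := by
          intro l
          rcases eq_or_ne l l0 with h | h
          · subst h
            rw [if_pos rfl, if_pos (by omega), one_mul]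
          · rw [if_neg h, if_neg, zero_mul]
            intro hc
            exact h (Fin.ext (by omega))
        rw [Finset.sum_congr rfl (fun l _ => key l), Finset.sum_ite_eq' Finset.univ l0,
          if_pos (Finset.mem_univ l0)]
        rcases eq_or_ne i m with h | h
        · subst h
          rw [if_pos (by omega : (l0 : ℕ) + (i : ℕ) = k), Matrix.diagonal_apply_eq]
          show (1 : ℂ) = if (i : ℕ) ≤ k then 1 else 0
          rw [if_pos hik]
        · have him : (i : ℕ) ≠ (m : ℕ) := fun hc => h (Fin.ext hc)
          rw [if_neg (by omega), Matrix.diagonal_apply_ne _ h]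
      · have hz : ∀ l : Fin n, l ∈ Finset.univ →
            ((if (i : ℕ) + (l : ℕ) = k then (1 : ℂ) else 0) *
              (if (l : ℕ) + (m : ℕ) = k then 1 else 0)) = 0 := by
          intro l _
          rw [if_neg (by omega), zero_mul]
        rw [Finset.sum_congr rfl hz, Finset.sum_const_zero]
        rcases eq_or_ne i m with h | h
        · subst h
          rw [Matrix.diagonal_apply_eq]
          show (0 : ℂ) = if (i : ℕ) ≤ k then 1 else 0
          rw [if_neg hik]
        · rw [Matrix.diagonal_apply_ne _ h]
    -- H * diagonal d = H
    have hH3 : H * Matrix.diagonal d = H := by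
      ext i m
      rw [Matrix.mul_diagonal]
      by_cases hm : (m : ℕ) ≤ k
      · have : d m = 1 := by
          show (if (m : ℕ) ≤ k then (1 : ℂ) else 0) = 1
          rw [if_pos hm]
        rw [this, mul_one]
      · have h0 : H i m = 0 := by rw [hHent, if_neg (by omega)]
        rw [h0, zero_mul]
    -- rank of diagonal d
    have hch : ∀ m : Fin n, d m ≠ 0 ↔ (m : ℕ) ≤ k := by
      intro m
      show (if (m : ℕ) ≤ k then (1 : ℂ) else 0) ≠ 0 ↔ (m : ℕ) ≤ k
      by_cases hm : (m : ℕ) ≤ k <;> simp [hm]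
    have hrankd : (Matrix.diagonal d).rank = r := by
      rw [Matrix.rank_diagonal]
      have e : {m : Fin n // d m ≠ 0} ≃ Fin (k + 1) :=
        { toFun := fun x => ⟨(x.1 : ℕ), by have h := (hch x.1).mp x.2; omega⟩
          invFun := fun x => ⟨⟨(x : ℕ), by have h := x.isLt; omega⟩,
            (hch _).mpr (show (x : ℕ) ≤ k from by have h := x.isLt; omega)⟩
          left_inv := fun x => Subtype.ext (Fin.ext rfl)
          right_inv := fun x => Fin.ext rfl }
      rw [Fintype.card_congr e, Fintype.card_fin]
      omega
    have hrankH : H.rank = r := by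
      have h1 : (H * H).rank ≤ H.rank := Matrix.rank_mul_le_left H H
      have h2 : H.rank ≤ (H * H).rank := by
        calc H.rank = (H * (H * H)).rank := by rw [hHH, hH3]
          _ ≤ (H * H).rank := Matrix.rank_mul_le_right H (H * H)
      rw [hHH, hrankd] at h1 h2
      omega
    -- rank of the stacked matrix equals rank H
    have hstack : (stackedTriHankel a 0).rank = H.rank := by
      have hM : stackedTriHankel a 0 = Matrix.fromRows H 0 := by
        rw [stackedTriHankel, triHankel_zero, hH]
      have h := Matrix.rank_conjTranspose_mul_self
        (Matrix.fromRows H (0 : Matrix (Fin n) (Fin n) ℂ))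
      rw [Matrix.conjTranspose_fromRows_eq_fromCols_conjTranspose,
        Matrix.fromCols_mul_fromRows] at h
      simp only [Matrix.conjTranspose_zero, Matrix.mul_zero, add_zero] at h
      rw [hM, ← h, Matrix.rank_conjTranspose_mul_self]
    rw [hstack, hrankH]
end

section
/- Let j ≥ 2 and let a, b ∈ ℂ^{2j−3}. Then the (4j−6) × (2j−3) matrix N(a,b), obtained by stacking the triangular Hankel matrices H(a) and H(b), satisfies rank N(a,b) ≤ 2j−3, with equality (full column rank) if and only if a_{2j−4} ≠ 0 or b_{2j−4} ≠ 0. Equivalently, the cokernel of N(a,b) (the stalk of the quantum moduli space) has dimension at least 2j−3, with equality on a nonempty Zariski open set. -/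
/-- If the top coefficient `a_{n-1}` is nonzero, then the triangular Hankel matrix has
trivial kernel. -/
lemma triHankel_mulVec_eq_zero {n : ℕ} (hn : 0 < n) (a : Fin n → ℂ)
    (ha : a ⟨n - 1, by omega⟩ ≠ 0) (x : Fin n → ℂ)
    (hx : (triHankel a).mulVec x = 0) : x = 0 := by
  have key : ∀ m : ℕ, ∀ hm : m < n, x ⟨m, hm⟩ = 0 := by
    intro m
    induction m using Nat.strong_induction_on with
    | _ m ih =>
      intro hm
      have hrow := congrFun hx ⟨n - 1 - m, by omega⟩
      simp only [Matrix.mulVec, dotProduct, triHankel, Pi.zero_apply] at hrow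
      rw [Finset.sum_eq_single (⟨m, hm⟩ : Fin n)] at hrow
      · have h1 : (n - 1 - m) + m < n := by omega
        rw [dif_pos h1] at hrow
        have heq : (⟨(n - 1 - m) + m, h1⟩ : Fin n) = ⟨n - 1, by omega⟩ := by
          apply Fin.ext; simp; omega
        rw [heq] at hrow
        exact (mul_eq_zero.mp hrow).resolve_left ha
      · intro k _ hk
        rcases lt_or_gt_of_ne (fun h : (k : ℕ) = m => hk (Fin.ext h)) with hlt | hgt
        · rw [show k = ⟨(k : ℕ), k.2⟩ from rfl, ih _ hlt k.2, mul_zero]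
        · rw [dif_neg (by omega), zero_mul]
      · intro h
        exact absurd (Finset.mem_univ _) h
  funext k
  exact key k.1 k.2

/-- The last column of a triangular Hankel matrix with vanishing top coefficient is zero. -/
lemma triHankel_last_col {n : ℕ} (hn : 0 < n) (c : Fin n → ℂ)
    (hc : c ⟨n - 1, by omega⟩ = 0) (i₀ : Fin n) :
    triHankel c i₀ ⟨n - 1, by omega⟩ = 0 := by
  simp only [triHankel]
  split_ifs with h
  · have : (i₀ : ℕ) = 0 := by omega
    have heq2 : (⟨(i₀ : ℕ) + (n - 1), h⟩ : Fin n) = ⟨n - 1, by omega⟩ := by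
      apply Fin.ext; simp; omega
    rw [heq2]; exact hc
  · rfl

/-- For `j ≥ 2` and `a, b ∈ ℂ^{2j−3}`, the `(4j−6) × (2j−3)` stacked triangular Hankel matrix
`N(a,b)` has rank at most `2j−3`, with equality (full column rank) if and only if
`a_{2j−4} ≠ 0` or `b_{2j−4} ≠ 0`; equivalently, the cokernel of `N(a,b)` has dimension at
least `2j−3`, with equality on a nonempty Zariski open set. -/
theorem stackedTriHankel_W2_rank (j : ℕ) (hj : 2 ≤ j) (a b : Fin (2 * j - 3) → ℂ) :
    (stackedTriHankel a b).rank ≤ 2 * j - 3 ∧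
      ((stackedTriHankel a b).rank = 2 * j - 3 ↔
        (a ⟨2 * j - 4, by omega⟩ ≠ 0 ∨ b ⟨2 * j - 4, by omega⟩ ≠ 0)) := by
  have hn : 0 < 2 * j - 3 := by omega
  have hlast : (⟨2 * j - 4, by omega⟩ : Fin (2 * j - 3)) = ⟨2 * j - 3 - 1, by omega⟩ := by
    apply Fin.ext; simp; omega
  have hrank : (stackedTriHankel a b).rank =
      Module.finrank ℂ (LinearMap.range (stackedTriHankel a b).mulVecLin) := rfl
  have hdom : Module.finrank ℂ (Fin (2 * j - 3) → ℂ) = 2 * j - 3 := Module.finrank_fin_fun ℂ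
  constructor
  · simpa using (stackedTriHankel a b).rank_le_card_width
  constructor
  · -- rank = n → some top coefficient nonzero
    intro hr
    by_contra hcon
    push_neg at hcon
    obtain ⟨ha, hb⟩ := hcon
    rw [hlast] at ha hb
    set e : Fin (2 * j - 3) → ℂ := Pi.single ⟨2 * j - 3 - 1, by omega⟩ 1 with he
    have hkerel : (stackedTriHankel a b).mulVecLin e = 0 := by
      rw [Matrix.mulVecLin_apply, he, Matrix.mulVec_single]
      funext i
      rw [MulOpposite.op_one, one_smul]
      cases i with
      | inl i₀ => exact triHankel_last_col hn a ha i₀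
      | inr i₀ => exact triHankel_last_col hn b hb i₀
    have hene : e ≠ 0 := by
      intro h0
      have := congrFun h0 ⟨2 * j - 3 - 1, by omega⟩
      simp [he] at this
    have hkpos : 0 < Module.finrank ℂ (LinearMap.ker (stackedTriHankel a b).mulVecLin) := by
      rw [Module.finrank_pos_iff]
      exact ⟨⟨e, LinearMap.mem_ker.mpr hkerel⟩, 0, by simp [hene]⟩
    have hrn := LinearMap.finrank_range_add_finrank_ker (stackedTriHankel a b).mulVecLin
    rw [hdom] at hrn
    rw [hrank] at hr
    omega
  · -- some top coefficient nonzero → full column rank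
    intro h
    have hinj : Function.Injective (stackedTriHankel a b).mulVecLin := by
      rw [← LinearMap.ker_eq_bot, LinearMap.ker_eq_bot']
      intro x hx
      rw [Matrix.mulVecLin_apply] at hx
      have hx' : (triHankel a).mulVec x = 0 ∧ (triHankel b).mulVec x = 0 := by
        constructor
        · funext i
          have := congrFun hx (Sum.inl i)
          rw [stackedTriHankel, Matrix.fromRows_mulVec] at this
          simpa using this
        · funext i
          have := congrFun hx (Sum.inr i)
          rw [stackedTriHankel, Matrix.fromRows_mulVec] at this
          simpa using this
      rcases h with ha | hb
      · exact triHankel_mulVec_eq_zero hn a (hlast ▸ ha) x hx'.1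
      · exact triHankel_mulVec_eq_zero hn b (hlast ▸ hb) x hx'.2
    rw [hrank, LinearMap.finrank_range_of_inj hinj, hdom]
end

section
/- Let j ≥ 2. For every integer r with 0 ≤ r ≤ 2j−3 there exist a, b ∈ ℂ^{2j−3} such that the (4j−6) × (2j−3) stacked triangular Hankel matrix N(a,b) has rank exactly r. Consequently every cokernel dimension (stalk rank of the quantum moduli space) between 2j−3 and 4j−6 occurs. -/
theorem stackedTriHankel_rank_eq {n r : ℕ} (hr : r ≤ n) :
    (stackedTriHankel (fun k : Fin n => if (k : ℕ) + 1 = r then (1:ℂ) else 0)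
      (0 : Fin n → ℂ)).rank = r := by
  set a : Fin n → ℂ := fun k => if (k : ℕ) + 1 = r then (1:ℂ) else 0 with ha
  set M := stackedTriHankel a (0 : Fin n → ℂ) with hM
  -- the family of would-be independent vectors
  set c : Fin r → (Fin n ⊕ Fin n → ℂ) :=
    fun t => Pi.single (Sum.inl (⟨t, lt_of_lt_of_le t.2 hr⟩ : Fin n)) 1 with hc
  have hcol : ∀ m : Fin n, ∀ hm : (m : ℕ) < r,
      M.transpose m = c ⟨r - 1 - m, by omega⟩ := by
    intro m hm
    funext x
    cases x with
    | inl i =>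
      simp only [hc, hM, Matrix.transpose_apply, stackedTriHankel,
        Matrix.fromRows_apply_inl, triHankel, ha, Pi.single_apply]
      by_cases h1 : (i : ℕ) + (m : ℕ) < n
      · simp only [h1, dif_pos]
        by_cases h2 : (i : ℕ) + (m : ℕ) + 1 = r
        · have : (Sum.inl i : Fin n ⊕ Fin n) = Sum.inl (⟨r - 1 - m, by omega⟩ : Fin n) := by
            congr 1; exact Fin.ext (show (i:ℕ) = r - 1 - (m:ℕ) by omega)
          simp [h2, this]
        · have : (Sum.inl i : Fin n ⊕ Fin n) ≠ Sum.inl (⟨r - 1 - m, by omega⟩ : Fin n) := by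
            simp only [ne_eq, Sum.inl.injEq]
            intro h; apply h2
            have := congrArg (Fin.val) h
            simp at this; omega
          simp [h2, this]
      · have h2 : (i : ℕ) + (m : ℕ) + 1 ≠ r := by omega
        have : (Sum.inl i : Fin n ⊕ Fin n) ≠ Sum.inl (⟨r - 1 - m, by omega⟩ : Fin n) := by
          simp only [ne_eq, Sum.inl.injEq]
          intro h; apply h2
          have := congrArg (Fin.val) h
          simp at this; omega
        simp [h1, this]
    | inr i =>
      simp [hc, hM, Matrix.transpose_apply, stackedTriHankel, Matrix.fromRows_apply_inr,
        triHankel, Pi.single_apply]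
  have hcol0 : ∀ m : Fin n, ¬ ((m : ℕ) < r) → M.transpose m = 0 := by
    intro m hm
    funext x
    cases x with
    | inl i =>
      have h2 : (i : ℕ) + (m : ℕ) + 1 ≠ r := by omega
      simp [hM, stackedTriHankel, Matrix.fromRows_apply_inl, triHankel, ha, h2]
    | inr i =>
      simp [hM, stackedTriHankel, Matrix.fromRows_apply_inr, triHankel]
  have hindep : LinearIndependent ℂ c := by
    have := (Pi.basisFun ℂ (Fin n ⊕ Fin n)).linearIndependent
    have hinj : Function.Injective
        (fun t : Fin r => Sum.inl (⟨t, lt_of_lt_of_le t.2 hr⟩ : Fin n) :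
          Fin r → Fin n ⊕ Fin n) := by
      intro s t h
      simp only [Sum.inl.injEq, Fin.mk.injEq] at h
      exact Fin.ext h
    have := this.comp _ hinj
    convert this using 1
    funext t
    simp [hc, Pi.basisFun_apply]
  have hspan : Submodule.span ℂ (Set.range M.transpose) = Submodule.span ℂ (Set.range c) := by
    apply le_antisymm
    · rw [Submodule.span_le]
      rintro _ ⟨m, rfl⟩
      by_cases hm : (m : ℕ) < r
      · rw [hcol m hm]
        exact Submodule.subset_span ⟨_, rfl⟩
      · rw [hcol0 m hm]
        exact (Submodule.span ℂ (Set.range c)).zero_mem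
    · rw [Submodule.span_le]
      rintro _ ⟨t, rfl⟩
      have htn : r - 1 - (t : ℕ) < n := by omega
      have : c t = M.transpose ⟨r - 1 - (t : ℕ), htn⟩ := by
        rw [hcol ⟨r - 1 - (t : ℕ), htn⟩ (show r - 1 - (t : ℕ) < r by omega)]
        have h : (⟨r - 1 - ((⟨r - 1 - (t:ℕ), htn⟩ : Fin n) : ℕ), by omega⟩ : Fin r) = t :=
          Fin.ext (by simp only [Fin.val_mk]; omega)
        exact (congrArg c h).symm
      rw [this]
      exact Submodule.subset_span ⟨_, rfl⟩
  rw [Matrix.rank_eq_finrank_span_cols]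
  show Module.finrank ℂ (Submodule.span ℂ (Set.range M.transpose)) = r
  rw [hspan, finrank_span_eq_card hindep,
    Fintype.card_fin]

/-- For `j ≥ 2` and every integer `r` with `0 ≤ r ≤ 2j−3`, there exist `a, b ∈ ℂ^{2j−3}` such
that the `(4j−6) × (2j−3)` stacked triangular Hankel matrix `N(a,b)` has rank exactly `r`;
consequently every cokernel dimension between `2j−3` and `4j−6` occurs. -/
theorem stackedTriHankel_W2_rank_surjective (j : ℕ) (hj : 2 ≤ j) (r : ℕ)
    (hr : r ≤ 2 * j - 3) :
    ∃ a b : Fin (2 * j - 3) → ℂ, (stackedTriHankel a b).rank = r := by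
  exact ⟨_, _, stackedTriHankel_rank_eq hr⟩
end
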